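/- Let A be a rational map of degree at least two such that some iterate A^{∘l} (l ≥ 1) is a Lattès map. Then A is a Lattès map. -/

import Mathlib

open Polynomial OnePoint
open scoped Classical

noncomputable section

namespace GenLattes

/-- Composition of rational functions: `rcomp f g = f ∘ g`. -/
def rcomp (f g : RatFunc ℂ) : RatFunc ℂ :=
  Polynomial.aeval g f.num / Polynomial.aeval g f.denom

/-- The degree of a rational function: the maximum of the degrees of its numerator and
denominator in lowest terms. -/
def rdeg (f : RatFunc ℂ) : ℕ := max f.num.natDegree f.denom.natDegree

/-- Evaluation of a rational function at a finite point, with value in the Riemann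
sphere `ℂP¹ = OnePoint ℂ`. -/
def evalF (f : RatFunc ℂ) (z : ℂ) : OnePoint ℂ :=
  if f.denom.eval z = 0 then ∞ else ((f.num.eval z / f.denom.eval z : ℂ) : OnePoint ℂ)

/-- The local degree (local multiplicity) of a rational function at a finite point. -/
def locDegF (f : RatFunc ℂ) (z : ℂ) : ℕ :=
  if f.denom.eval z = 0 then rootMultiplicity z f.denom
  else rootMultiplicity z (f.num - Polynomial.C (f.num.eval z / f.denom.eval z) * f.denom)

/-- The rational function `f(1/X)`. -/
def flip (f : RatFunc ℂ) : RatFunc ℂ := rcomp f (RatFunc.X)⁻¹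

/-- The self-map of the Riemann sphere `ℂP¹ = OnePoint ℂ` induced by a rational function. -/
def evalOP (f : RatFunc ℂ) (x : OnePoint ℂ) : OnePoint ℂ :=
  OnePoint.rec (evalF (flip f) 0) (fun z => evalF f z) x

/-- The local degree `deg_x f` of a rational function at a point of the Riemann sphere. -/
def locDeg (f : RatFunc ℂ) (x : OnePoint ℂ) : ℕ :=
  OnePoint.rec (locDegF (flip f) 0) (fun z => locDegF f z) x

/-- The iterate `f^{∘l}` of a rational function (with `riter f 0 = X = id`). -/
def riter (f : RatFunc ℂ) : ℕ → RatFunc ℂ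
  | 0 => RatFunc.X
  | l + 1 => rcomp f (riter f l)

/-- An orbifold on the Riemann sphere: a ramification function `ν : ℂP¹ → ℕ` with
`ν(z) ≥ 1` everywhere and `ν(z) = 1` outside a finite set. -/
structure Orbifold where
  nu : OnePoint ℂ → ℕ
  one_le : ∀ z, 1 ≤ nu z
  finite : {z : OnePoint ℂ | nu z ≠ 1}.Finite

/-- A good orbifold: it is forbidden to have exactly one point with `ν > 1`, or exactly
two such points with different values of `ν`. -/
def Orbifold.Good (O : Orbifold) : Prop :=
  (¬ ∃ z, {w : OnePoint ℂ | O.nu w ≠ 1} = {z}) ∧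
  (¬ ∃ z₁ z₂, z₁ ≠ z₂ ∧ {w : OnePoint ℂ | O.nu w ≠ 1} = {z₁, z₂} ∧ O.nu z₁ ≠ O.nu z₂)

/-- A nontrivial orbifold (distinct from the non-ramified sphere). -/
def Orbifold.IsNontrivial (O : Orbifold) : Prop := ∃ z, 1 < O.nu z

/-- The relation `O₁ ⪯ O₂`: pointwise divisibility of ramification functions. -/
def Orbifold.Prec (O₁ O₂ : Orbifold) : Prop := ∀ z, O₁.nu z ∣ O₂.nu z

/-- The signature of an orbifold: the multiset of values of `ν` on `c(O) = {ν > 1}`. -/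
def Orbifold.signature (O : Orbifold) : Multiset ℕ := O.finite.toFinset.val.map O.nu

/-- The Euler characteristic `χ(O) = 2 + Σ (1/ν(z) - 1)`. -/
def Orbifold.eulerChar (O : Orbifold) : ℚ :=
  2 + ∑ z ∈ O.finite.toFinset, ((O.nu z : ℚ)⁻¹ - 1)

/-- `A : O₁ → O₂` is a holomorphic map between orbifolds:
`ν₂(A(z)) ∣ ν₁(z)·deg_z A` for all `z`. -/
def IsHolo (A : RatFunc ℂ) (O₁ O₂ : Orbifold) : Prop :=
  ∀ z, O₂.nu (evalOP A z) ∣ O₁.nu z * locDeg A z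

/-- `A : O₁ → O₂` is a minimal holomorphic map between orbifolds:
`ν₂(A(z)) = ν₁(z)·gcd(deg_z A, ν₂(A(z)))` for all `z`. -/
def IsMinHolo (A : RatFunc ℂ) (O₁ O₂ : Orbifold) : Prop :=
  ∀ z, O₂.nu (evalOP A z) = O₁.nu z * Nat.gcd (locDeg A z) (O₂.nu (evalOP A z))

/-- `A : O₁ → O₂` is a covering map between orbifolds:
`ν₂(A(z)) = ν₁(z)·deg_z A` for all `z`. -/
def IsCovering (A : RatFunc ℂ) (O₁ O₂ : Orbifold) : Prop :=
  ∀ z, O₂.nu (evalOP A z) = O₁.nu z * locDeg A z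

/-- `A` and `B` are conjugate by a Möbius transformation: `A = μ ∘ B ∘ μ⁻¹`. -/
def Conjugate (A B : RatFunc ℂ) : Prop :=
  ∃ μ ν : RatFunc ℂ, rcomp μ ν = RatFunc.X ∧ rcomp ν μ = RatFunc.X ∧
    A = rcomp (rcomp μ B) ν

/-- The Chebyshev polynomial `T_d` viewed as a rational function. -/
def chebyRF (d : ℕ) : RatFunc ℂ :=
  algebraMap (Polynomial ℂ) (RatFunc ℂ) (Polynomial.Chebyshev.T ℂ d)

end GenLattes

namespace GenLattes

/-- A Lattès map: a rational map of degree at least two admitting a nontrivial orbifold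
`O` on `ℂP¹` such that `A : O → O` is a covering self-map. -/
def IsLattes (A : RatFunc ℂ) : Prop :=
  2 ≤ rdeg A ∧ ∃ O : Orbifold, O.IsNontrivial ∧ IsCovering A O O

/-- **Corollary.** If some iterate `A^{∘l}` (`l ≥ 1`) of a rational map `A` of degree at
least two is a Lattès map, then `A` is a Lattès map. -/
-- ### nonconstant rational functions

def Nonconst (f : RatFunc ℂ) : Prop := ∀ c : ℂ, f ≠ RatFunc.C c

lemma Nonconst.ne_zero {f : RatFunc ℂ} (h : Nonconst f) : f ≠ 0 := by
  intro h0; exact h 0 (by simp [h0])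

lemma algMap_ne_zero {p : Polynomial ℂ} (hp : p ≠ 0) :
    algebraMap (Polynomial ℂ) (RatFunc ℂ) p ≠ 0 := by
  simpa using (map_ne_zero_iff _ (RatFunc.algebraMap_injective ℂ)).mpr hp

lemma aeval_factor (g : RatFunc ℂ) {q : Polynomial ℂ} (hq : q ≠ 0) :
    Polynomial.aeval g q =
      RatFunc.C q.leadingCoeff * (q.roots.map (fun a => g - RatFunc.C a)).prod := by
  conv_lhs => rw [← Polynomial.C_leadingCoeff_mul_prod_multiset_X_sub_C
    (Polynomial.splits_iff_card_roots.mp (IsAlgClosed.splits q))]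
  rw [map_mul, Polynomial.aeval_C, map_multiset_prod, Multiset.map_map,
    RatFunc.algebraMap_eq_C]
  congr 1
  congr 1
  apply Multiset.map_congr rfl
  intro a _
  simp [Function.comp, RatFunc.algebraMap_eq_C]

lemma aeval_ne_zero {g : RatFunc ℂ} (hg : Nonconst g) {q : Polynomial ℂ} (hq : q ≠ 0) :
    Polynomial.aeval g q ≠ 0 := by
  rw [aeval_factor g hq]
  apply mul_ne_zero
  · intro h
    have : q.leadingCoeff = 0 := by
      have hinj : Function.Injective (RatFunc.C (K := ℂ)) := (RatFunc.C (K := ℂ)).injective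
      exact (map_eq_zero_iff _ hinj).mp h
    exact hq (Polynomial.leadingCoeff_eq_zero.mp this)
  · rw [Ne, Multiset.prod_eq_zero_iff]
    intro hmem
    rw [Multiset.mem_map] at hmem
    obtain ⟨a, _, ha⟩ := hmem
    exact hg a (by linear_combination (norm := ring_nf) ha)

-- ### the composition ring homomorphism

def aevalRingHom (g : RatFunc ℂ) : Polynomial ℂ →+* RatFunc ℂ :=
  (Polynomial.aeval g).toRingHom

lemma aevalRingHom_injective {g : RatFunc ℂ} (hg : Nonconst g) :
    Function.Injective (aevalRingHom g) := by
  rw [injective_iff_map_eq_zero (aevalRingHom g)]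
  intro p hp
  by_contra h
  exact aeval_ne_zero hg h hp

def sigma {g : RatFunc ℂ} (hg : Nonconst g) : RatFunc ℂ →+* RatFunc ℂ :=
  IsFractionRing.lift (aevalRingHom_injective hg)

lemma sigma_algebraMap {g : RatFunc ℂ} (hg : Nonconst g) (p : Polynomial ℂ) :
    sigma hg (algebraMap (Polynomial ℂ) (RatFunc ℂ) p) = Polynomial.aeval g p := by
  unfold sigma
  exact IsFractionRing.lift_algebraMap _ _

lemma rcomp_eq_sigma {g : RatFunc ℂ} (hg : Nonconst g) (f : RatFunc ℂ) :
    rcomp f g = sigma hg f := by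
  conv_rhs => rw [← RatFunc.num_div_denom f]
  rw [map_div₀, sigma_algebraMap, sigma_algebraMap]
  rfl

lemma sigma_C {g : RatFunc ℂ} (hg : Nonconst g) (c : ℂ) :
    sigma hg (RatFunc.C c) = RatFunc.C c := by
  conv_lhs => rw [← RatFunc.algebraMap_C, sigma_algebraMap, Polynomial.aeval_C,
    RatFunc.algebraMap_eq_C]

lemma sigma_X {g : RatFunc ℂ} (hg : Nonconst g) : sigma hg RatFunc.X = g := by
  rw [← RatFunc.algebraMap_X, sigma_algebraMap, Polynomial.aeval_X]

lemma sigma_injective {g : RatFunc ℂ} (hg : Nonconst g) : Function.Injective (sigma hg) :=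
  (sigma hg).injective

lemma sigma_ne_zero {g : RatFunc ℂ} (hg : Nonconst g) {f : RatFunc ℂ} (hf : f ≠ 0) :
    sigma hg f ≠ 0 :=
  (map_ne_zero_iff _ (sigma_injective hg)).mpr hf

lemma nonconst_sigma {g : RatFunc ℂ} (hg : Nonconst g) {f : RatFunc ℂ} (hf : Nonconst f) :
    Nonconst (sigma hg f) := by
  intro c hc
  exact hf c (sigma_injective hg (by rw [hc, sigma_C]))

lemma nonconst_rcomp {f g : RatFunc ℂ} (hf : Nonconst f) (hg : Nonconst g) :
    Nonconst (rcomp f g) := by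
  rw [rcomp_eq_sigma hg]; exact nonconst_sigma hg hf

lemma sigma_sigma {g h : RatFunc ℂ} (hg : Nonconst g) (hh : Nonconst h) (f : RatFunc ℂ) :
    sigma hh (sigma hg f) = sigma (nonconst_sigma hh hg) f := by
  have key : (sigma hh).comp (sigma hg) = sigma (nonconst_sigma hh hg) := by
    apply IsLocalization.ringHom_ext (nonZeroDivisors (Polynomial ℂ))
    apply Polynomial.ringHom_ext
    · intro a
      simp only [RingHom.comp_apply, RatFunc.algebraMap_C, sigma_algebraMap,
        Polynomial.aeval_C, RatFunc.algebraMap_eq_C, sigma_C]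
    · simp only [RingHom.comp_apply, RatFunc.algebraMap_X, sigma_algebraMap,
        Polynomial.aeval_X, sigma_X]
  calc sigma hh (sigma hg f) = ((sigma hh).comp (sigma hg)) f := rfl
    _ = _ := by rw [key]

lemma rcomp_X (f : RatFunc ℂ) : rcomp f RatFunc.X = f := by
  unfold rcomp
  rw [← RatFunc.algebraMap_X]
  rw [Polynomial.aeval_algebraMap_apply, Polynomial.aeval_algebraMap_apply]
  simp only [Polynomial.aeval_X_left_apply]
  exact RatFunc.num_div_denom f

lemma nonconst_X : Nonconst (RatFunc.X : RatFunc ℂ) := by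
  intro c hc
  have := congrArg RatFunc.num hc
  rw [← RatFunc.algebraMap_X, ← RatFunc.algebraMap_C, RatFunc.num_algebraMap,
    RatFunc.num_algebraMap] at this
  exact Polynomial.X_ne_C c this

lemma X_rcomp {g : RatFunc ℂ} (hg : Nonconst g) : rcomp RatFunc.X g = g := by
  rw [rcomp_eq_sigma hg, sigma_X]

lemma rcomp_assoc {f g h : RatFunc ℂ} (hg : Nonconst g) (hh : Nonconst h) :
    rcomp (rcomp f g) h = rcomp f (rcomp g h) := by
  rw [rcomp_eq_sigma hg f, rcomp_eq_sigma hh (sigma hg f), sigma_sigma,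
    rcomp_eq_sigma hh g, rcomp_eq_sigma (nonconst_sigma hh hg) f]

lemma nonconst_inv_X : Nonconst (RatFunc.X : RatFunc ℂ)⁻¹ := by
  intro c hc
  rcases eq_or_ne c 0 with rfl | hc0
  · rw [map_zero, inv_eq_zero] at hc
    exact nonconst_X.ne_zero hc
  · have : (RatFunc.X : RatFunc ℂ) = (RatFunc.C c)⁻¹ := by
      rw [← hc, inv_inv]
    rw [← map_inv₀] at this
    exact nonconst_X c⁻¹ this

-- ### order of vanishing at a finite point

def ordAt (z : ℂ) (f : RatFunc ℂ) : ℤ :=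
  (rootMultiplicity z f.num : ℤ) - rootMultiplicity z f.denom

lemma num_eval_ne_zero_of_denom {f : RatFunc ℂ} {z : ℂ}
    (h : f.denom.eval z = 0) : f.num.eval z ≠ 0 := by
  intro hn
  obtain ⟨a, b, hab⟩ := RatFunc.isCoprime_num_denom f
  have := congrArg (Polynomial.eval z) hab
  simp [hn, h] at this

lemma ordAt_rep {p q : Polynomial ℂ} (hp : p ≠ 0) (hq : q ≠ 0) {f : RatFunc ℂ}
    (hf : f = algebraMap (Polynomial ℂ) (RatFunc ℂ) p / algebraMap (Polynomial ℂ) (RatFunc ℂ) q)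
    (z : ℂ) :
    ordAt z f = (rootMultiplicity z p : ℤ) - rootMultiplicity z q := by
  have hf0 : f ≠ 0 := by
    rw [hf]
    exact div_ne_zero (algMap_ne_zero hp) (algMap_ne_zero hq)
  have hnum : f.num ≠ 0 := RatFunc.num_ne_zero hf0
  have hden : f.denom ≠ 0 := RatFunc.denom_ne_zero f
  have cross : f.num * q = p * f.denom := by
    apply RatFunc.algebraMap_injective ℂ
    rw [map_mul, map_mul]
    have h1 : algebraMap (Polynomial ℂ) (RatFunc ℂ) f.num / algebraMap (Polynomial ℂ) (RatFunc ℂ) f.denom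
        = algebraMap (Polynomial ℂ) (RatFunc ℂ) p / algebraMap (Polynomial ℂ) (RatFunc ℂ) q := by
      rw [RatFunc.num_div_denom, hf]
    rwa [div_eq_div_iff (algMap_ne_zero hden) (algMap_ne_zero hq)] at h1
  have h1 : rootMultiplicity z (f.num * q) = rootMultiplicity z (p * f.denom) := by rw [cross]
  rw [Polynomial.rootMultiplicity_mul (mul_ne_zero hnum hq),
    Polynomial.rootMultiplicity_mul (mul_ne_zero hp hden)] at h1
  unfold ordAt
  omega

lemma ordAt_algebraMap {p : Polynomial ℂ} (hp : p ≠ 0) (z : ℂ) :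
    ordAt z (algebraMap (Polynomial ℂ) (RatFunc ℂ) p) = rootMultiplicity z p := by
  rw [ordAt_rep hp one_ne_zero (f := algebraMap (Polynomial ℂ) (RatFunc ℂ) p) (by simp) z]
  simp [Polynomial.rootMultiplicity_eq_zero (by simp : ¬ (1:Polynomial ℂ).IsRoot z)]

lemma ordAt_mul {f h : RatFunc ℂ} (hf : f ≠ 0) (hh : h ≠ 0) (z : ℂ) :
    ordAt z (f * h) = ordAt z f + ordAt z h := by
  have hrep : f * h = algebraMap (Polynomial ℂ) (RatFunc ℂ) (f.num * h.num) /
      algebraMap (Polynomial ℂ) (RatFunc ℂ) (f.denom * h.denom) := by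
    rw [map_mul, map_mul]
    conv_rhs => rw [← div_mul_div_comm, RatFunc.num_div_denom, RatFunc.num_div_denom]
  rw [ordAt_rep (mul_ne_zero (RatFunc.num_ne_zero hf) (RatFunc.num_ne_zero hh))
    (mul_ne_zero (RatFunc.denom_ne_zero f) (RatFunc.denom_ne_zero h)) hrep z,
    Polynomial.rootMultiplicity_mul (mul_ne_zero (RatFunc.num_ne_zero hf) (RatFunc.num_ne_zero hh)),
    Polynomial.rootMultiplicity_mul
      (mul_ne_zero (RatFunc.denom_ne_zero f) (RatFunc.denom_ne_zero h))]
  unfold ordAt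
  push_cast
  ring

lemma ordAt_div {f h : RatFunc ℂ} (hf : f ≠ 0) (hh : h ≠ 0) (z : ℂ) :
    ordAt z (f / h) = ordAt z f - ordAt z h := by
  have h1 : f / h ≠ 0 := div_ne_zero hf hh
  have := ordAt_mul h1 hh z
  rw [div_mul_cancel₀ _ hh] at this
  omega

lemma ordAt_C {c : ℂ} (hc : c ≠ 0) (z : ℂ) : ordAt z (RatFunc.C c) = 0 := by
  rw [← RatFunc.algebraMap_C, ordAt_algebraMap (by simpa using hc)]
  simp [Polynomial.rootMultiplicity_eq_zero (show ¬ (Polynomial.C c).IsRoot z by simp [hc])]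

lemma ordAt_multiset_prod (z : ℂ) (M : Multiset (RatFunc ℂ)) (h : ∀ u ∈ M, u ≠ 0) :
    ordAt z M.prod = (M.map (ordAt z)).sum := by
  induction M using Multiset.induction with
  | empty => simp [show ordAt z 1 = 0 by simpa using ordAt_C one_ne_zero z]
  | cons a M ih =>
    have ha : a ≠ 0 := h a (Multiset.mem_cons_self a M)
    have hM : ∀ u ∈ M, u ≠ 0 := fun u hu => h u (Multiset.mem_cons_of_mem hu)
    have hMp : M.prod ≠ 0 := by
      rw [Ne, Multiset.prod_eq_zero_iff]
      intro h0; exact hM 0 h0 rfl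
    rw [Multiset.prod_cons, ordAt_mul ha hMp, ih hM, Multiset.map_cons, Multiset.sum_cons]

-- ### characterizations of evalF / locDegF via ordAt

lemma denom_eval_iff_ordAt {f : RatFunc ℂ} (hf : f ≠ 0) (z : ℂ) :
    f.denom.eval z = 0 ↔ ordAt z f < 0 := by
  unfold ordAt
  constructor
  · intro h
    have h1 : 0 < rootMultiplicity z f.denom :=
      (Polynomial.rootMultiplicity_pos (RatFunc.denom_ne_zero f)).mpr h
    have h2 : rootMultiplicity z f.num = 0 :=
      Polynomial.rootMultiplicity_eq_zero (num_eval_ne_zero_of_denom h)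
    omega
  · intro h
    by_contra hne
    have : rootMultiplicity z f.denom = 0 := Polynomial.rootMultiplicity_eq_zero hne
    omega

lemma evalF_eq_infty_iff {f : RatFunc ℂ} (hf : f ≠ 0) (z : ℂ) :
    evalF f z = ∞ ↔ ordAt z f < 0 := by
  rw [← denom_eval_iff_ordAt hf]
  unfold evalF
  split
  · simp_all
  · rename_i h
    constructor
    · intro hcoe; exact absurd hcoe (OnePoint.coe_ne_infty _)
    · intro h0; exact absurd h0 h

lemma sub_C_rep (f : RatFunc ℂ) (c : ℂ) :
    f - RatFunc.C c = algebraMap (Polynomial ℂ) (RatFunc ℂ) (f.num - Polynomial.C c * f.denom) /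
      algebraMap (Polynomial ℂ) (RatFunc ℂ) f.denom := by
  rw [map_sub, map_mul, RatFunc.algebraMap_C, sub_div, mul_div_assoc,
    div_self (algMap_ne_zero (RatFunc.denom_ne_zero f)), mul_one, RatFunc.num_div_denom]

lemma sub_C_ne_zero {f : RatFunc ℂ} (hf : Nonconst f) (c : ℂ) :
    f.num - Polynomial.C c * f.denom ≠ 0 := by
  intro h0
  apply hf c
  have : f.num = Polynomial.C c * f.denom := by linear_combination h0
  rw [← RatFunc.num_div_denom f, this, map_mul, RatFunc.algebraMap_C, mul_div_assoc,
    div_self (algMap_ne_zero (RatFunc.denom_ne_zero f)), mul_one]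

lemma ordAt_sub_C {f : RatFunc ℂ} (hf : Nonconst f) (c : ℂ) (z : ℂ) :
    ordAt z (f - RatFunc.C c) =
      (rootMultiplicity z (f.num - Polynomial.C c * f.denom) : ℤ) -
        rootMultiplicity z f.denom :=
  ordAt_rep (sub_C_ne_zero hf c) (RatFunc.denom_ne_zero f) (sub_C_rep f c) z

lemma evalF_eq_coe_iff {f : RatFunc ℂ} (hf : Nonconst f) (z : ℂ) (c : ℂ) :
    evalF f z = (c : OnePoint ℂ) ↔ 0 < ordAt z (f - RatFunc.C c) := by
  rw [ordAt_sub_C hf]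
  unfold evalF
  by_cases h : f.denom.eval z = 0
  · rw [if_pos h]
    have h2 : rootMultiplicity z (f.num - Polynomial.C c * f.denom) = 0 := by
      apply Polynomial.rootMultiplicity_eq_zero
      simp only [Polynomial.IsRoot, Polynomial.eval_sub, Polynomial.eval_mul, Polynomial.eval_C, h,
        mul_zero, sub_zero]
      exact num_eval_ne_zero_of_denom h
    have h3 : 0 < rootMultiplicity z f.denom :=
      (Polynomial.rootMultiplicity_pos (RatFunc.denom_ne_zero f)).mpr h
    constructor
    · intro hcontra; exact absurd hcontra.symm (OnePoint.coe_ne_infty c)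
    · intro hcontra; omega
  · rw [if_neg h]
    have h2 : rootMultiplicity z f.denom = 0 := Polynomial.rootMultiplicity_eq_zero h
    rw [h2]
    rw [OnePoint.coe_eq_coe]
    constructor
    · intro hv
      have : (f.num - Polynomial.C c * f.denom).IsRoot z := by
        simp only [Polynomial.IsRoot, Polynomial.eval_sub, Polynomial.eval_mul, Polynomial.eval_C]
        rw [← hv]
        field_simp
        ring
      have := (Polynomial.rootMultiplicity_pos (sub_C_ne_zero hf c)).mpr this
      omega
    · intro hpos
      have : (f.num - Polynomial.C c * f.denom).IsRoot z := by
        rw [← Polynomial.rootMultiplicity_pos (sub_C_ne_zero hf c)]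
        omega
      simp only [Polynomial.IsRoot, Polynomial.eval_sub, Polynomial.eval_mul,
        Polynomial.eval_C] at this
      field_simp
      linear_combination this

lemma locDegF_of_pole {f : RatFunc ℂ} (hf : f ≠ 0) {z : ℂ} (h : f.denom.eval z = 0) :
    (locDegF f z : ℤ) = -ordAt z f := by
  unfold locDegF
  rw [if_pos h]
  have h2 : rootMultiplicity z f.num = 0 :=
    Polynomial.rootMultiplicity_eq_zero (num_eval_ne_zero_of_denom h)
  unfold ordAt
  omega

lemma locDegF_of_value {f : RatFunc ℂ} (hf : Nonconst f) {z : ℂ} {c : ℂ}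
    (h : evalF f z = (c : OnePoint ℂ)) :
    (locDegF f z : ℤ) = ordAt z (f - RatFunc.C c) := by
  have hden : f.denom.eval z ≠ 0 := by
    intro h0
    rw [show evalF f z = ∞ from by unfold evalF; rw [if_pos h0]] at h
    exact (OnePoint.infty_ne_coe c) h
  have hval : f.num.eval z / f.denom.eval z = c := by
    unfold evalF at h
    rw [if_neg hden, OnePoint.coe_eq_coe] at h
    exact h
  rw [ordAt_sub_C hf]
  unfold locDegF
  rw [if_neg hden, hval, Polynomial.rootMultiplicity_eq_zero hden]
  omega

-- ### order at infinity and master composition lemma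

def OrdOP (u : RatFunc ℂ) : OnePoint ℂ → ℤ :=
  OnePoint.rec ((u.denom.natDegree : ℤ) - u.num.natDegree) (fun z => ordAt z u)

@[simp] lemma OrdOP_coe (u : RatFunc ℂ) (z : ℂ) : OrdOP u (z : OnePoint ℂ) = ordAt z u := rfl
@[simp] lemma OrdOP_infty (u : RatFunc ℂ) :
    OrdOP u ∞ = (u.denom.natDegree : ℤ) - u.num.natDegree := rfl

lemma ordOP_infty_rep {p q : Polynomial ℂ} (hp : p ≠ 0) (hq : q ≠ 0) {f : RatFunc ℂ}
    (hf : f = algebraMap (Polynomial ℂ) (RatFunc ℂ) p / algebraMap (Polynomial ℂ) (RatFunc ℂ) q) :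
    OrdOP f ∞ = (q.natDegree : ℤ) - p.natDegree := by
  have hf0 : f ≠ 0 := by
    rw [hf]; exact div_ne_zero (algMap_ne_zero hp) (algMap_ne_zero hq)
  have hnum : f.num ≠ 0 := RatFunc.num_ne_zero hf0
  have hden : f.denom ≠ 0 := RatFunc.denom_ne_zero f
  have cross : f.num * q = p * f.denom := by
    apply RatFunc.algebraMap_injective ℂ
    rw [map_mul, map_mul]
    have h1 : algebraMap (Polynomial ℂ) (RatFunc ℂ) f.num /
        algebraMap (Polynomial ℂ) (RatFunc ℂ) f.denom
        = algebraMap (Polynomial ℂ) (RatFunc ℂ) p / algebraMap (Polynomial ℂ) (RatFunc ℂ) q := by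
      rw [RatFunc.num_div_denom, hf]
    rwa [div_eq_div_iff (algMap_ne_zero hden) (algMap_ne_zero hq)] at h1
  have h1 := congrArg Polynomial.natDegree cross
  rw [Polynomial.natDegree_mul hnum hq, Polynomial.natDegree_mul hp hden] at h1
  rw [OrdOP_infty]
  omega

lemma sum_map_ite (v : ℂ) (m : ℤ) (M : Multiset ℂ) :
    (M.map (fun a => if a = v then m else 0)).sum = m * M.count v := by
  induction M using Multiset.induction with
  | empty => simp
  | cons a M ih =>
    rw [Multiset.map_cons, Multiset.sum_cons, ih, Multiset.count_cons]
    by_cases h : a = v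
    · subst h; simp; ring
    · have : ¬ v = a := fun hh => h hh.symm
      simp [h, this]

lemma sum_map_const' (k : ℤ) (M : Multiset ℂ) :
    (M.map (fun _ => k)).sum = M.card * k := by
  induction M using Multiset.induction with
  | empty => simp
  | cons a M ih =>
    rw [Multiset.map_cons, Multiset.sum_cons, ih, Multiset.card_cons]
    push_cast
    ring

lemma ordAt_sub_C_pole {g : RatFunc ℂ} (hg : Nonconst g) {z : ℂ} (h : g.denom.eval z = 0)
    (a : ℂ) : ordAt z (g - RatFunc.C a) = -(rootMultiplicity z g.denom : ℤ) := by
  rw [ordAt_sub_C hg]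
  have : rootMultiplicity z (g.num - Polynomial.C a * g.denom) = 0 := by
    apply Polynomial.rootMultiplicity_eq_zero
    simp only [Polynomial.IsRoot, Polynomial.eval_sub, Polynomial.eval_mul, Polynomial.eval_C, h,
      mul_zero, sub_zero]
    exact num_eval_ne_zero_of_denom h
  omega

lemma ordAt_sub_C_value {g : RatFunc ℂ} (hg : Nonconst g) {z : ℂ} (h : g.denom.eval z ≠ 0)
    (a : ℂ) : ordAt z (g - RatFunc.C a) =
      if a = g.num.eval z / g.denom.eval z then (locDegF g z : ℤ) else 0 := by
  have hval : evalF g z = ((g.num.eval z / g.denom.eval z : ℂ) : OnePoint ℂ) := by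
    unfold evalF; rw [if_neg h]
  by_cases ha : a = g.num.eval z / g.denom.eval z
  · rw [if_pos ha, locDegF_of_value hg (c := a) (by rw [hval, ha])]
  · rw [if_neg ha, ordAt_sub_C hg, Polynomial.rootMultiplicity_eq_zero h,
      Polynomial.rootMultiplicity_eq_zero]
    · simp
    · simp only [Polynomial.IsRoot, Polynomial.eval_sub, Polynomial.eval_mul, Polynomial.eval_C]
      intro h0
      apply ha
      rw [eq_div_iff h]
      linear_combination -h0
  
lemma ordAt_sigma {g : RatFunc ℂ} (hg : Nonconst g) {u : RatFunc ℂ} (hu : u ≠ 0) (z : ℂ) :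
    ordAt z (sigma hg u) = locDegF g z * OrdOP u (evalF g z) := by
  have hnum : u.num ≠ 0 := RatFunc.num_ne_zero hu
  have hden : u.denom ≠ 0 := RatFunc.denom_ne_zero u
  have hrep : sigma hg u = Polynomial.aeval g u.num / Polynomial.aeval g u.denom := by
    conv_lhs => rw [← RatFunc.num_div_denom u]
    rw [map_div₀, sigma_algebraMap, sigma_algebraMap]
  have factor_ord : ∀ p : Polynomial ℂ, p ≠ 0 →
      ordAt z (Polynomial.aeval g p) =
        ((p.roots.map (fun a => ordAt z (g - RatFunc.C a))).sum) := by
    intro p hp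
    rw [aeval_factor g hp]
    have hprod : ∀ v ∈ p.roots.map (fun a => g - RatFunc.C a), v ≠ 0 := by
      intro v hv
      rw [Multiset.mem_map] at hv
      obtain ⟨a, _, rfl⟩ := hv
      intro h0
      exact hg a (by linear_combination (norm := ring_nf) h0)
    have hlc : p.leadingCoeff ≠ 0 := fun h => hp (Polynomial.leadingCoeff_eq_zero.mp h)
    have hCnz : (RatFunc.C p.leadingCoeff : RatFunc ℂ) ≠ 0 := by
      simpa using (map_ne_zero_iff _ RatFunc.C.injective).mpr hlc
    have hPnz : (p.roots.map (fun a => g - RatFunc.C a)).prod ≠ 0 := by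
      rw [Ne, Multiset.prod_eq_zero_iff]
      intro h0; exact hprod 0 h0 rfl
    rw [ordAt_mul hCnz hPnz, ordAt_C hlc, ordAt_multiset_prod z _ hprod, Multiset.map_map,
      zero_add]
    rfl
  have haevn : Polynomial.aeval g u.num ≠ 0 := aeval_ne_zero hg hnum
  have haevd : Polynomial.aeval g u.denom ≠ 0 := aeval_ne_zero hg hden
  rw [hrep, ordAt_div haevn haevd, factor_ord u.num hnum, factor_ord u.denom hden]
  by_cases h : g.denom.eval z = 0
  · -- pole of g at z
    have heval : evalF g z = ∞ := by unfold evalF; rw [if_pos h]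
    have hld : (locDegF g z : ℤ) = rootMultiplicity z g.denom := by
      unfold locDegF; rw [if_pos h]
    rw [heval, OrdOP_infty]
    have e1 : (u.num.roots.map (fun a => ordAt z (g - RatFunc.C a))).sum =
        u.num.roots.card * (-(rootMultiplicity z g.denom : ℤ)) := by
      rw [show (u.num.roots.map (fun a => ordAt z (g - RatFunc.C a))) =
        (u.num.roots.map (fun _ => -(rootMultiplicity z g.denom : ℤ))) from
        Multiset.map_congr rfl (fun a _ => ordAt_sub_C_pole hg h a), sum_map_const']
    have e2 : (u.denom.roots.map (fun a => ordAt z (g - RatFunc.C a))).sum =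
        u.denom.roots.card * (-(rootMultiplicity z g.denom : ℤ)) := by
      rw [show (u.denom.roots.map (fun a => ordAt z (g - RatFunc.C a))) =
        (u.denom.roots.map (fun _ => -(rootMultiplicity z g.denom : ℤ))) from
        Multiset.map_congr rfl (fun a _ => ordAt_sub_C_pole hg h a), sum_map_const']
    have c1 : (u.num.roots.card : ℤ) = u.num.natDegree := by
      exact_mod_cast Polynomial.splits_iff_card_roots.mp (IsAlgClosed.splits u.num)
    have c2 : (u.denom.roots.card : ℤ) = u.denom.natDegree := by
      exact_mod_cast Polynomial.splits_iff_card_roots.mp (IsAlgClosed.splits u.denom)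
    rw [e1, e2, c1, c2, hld]
    ring
  · -- finite value of g at z
    set v := g.num.eval z / g.denom.eval z with hv
    have heval : evalF g z = (v : OnePoint ℂ) := by unfold evalF; rw [if_neg h]
    rw [heval, OrdOP_coe]
    have e1 : (u.num.roots.map (fun a => ordAt z (g - RatFunc.C a))).sum =
        (locDegF g z : ℤ) * u.num.roots.count v := by
      rw [show (u.num.roots.map (fun a => ordAt z (g - RatFunc.C a))) =
        (u.num.roots.map (fun a => if a = v then (locDegF g z : ℤ) else 0)) from
        Multiset.map_congr rfl (fun a _ => ordAt_sub_C_value hg h a), sum_map_ite]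
    have e2 : (u.denom.roots.map (fun a => ordAt z (g - RatFunc.C a))).sum =
        (locDegF g z : ℤ) * u.denom.roots.count v := by
      rw [show (u.denom.roots.map (fun a => ordAt z (g - RatFunc.C a))) =
        (u.denom.roots.map (fun a => if a = v then (locDegF g z : ℤ) else 0)) from
        Multiset.map_congr rfl (fun a _ => ordAt_sub_C_value hg h a), sum_map_ite]
    rw [e1, e2, Polynomial.count_roots, Polynomial.count_roots]
    unfold ordAt
    ring

-- ### the sphere-level theory

@[simp] lemma evalOP_coe (f : RatFunc ℂ) (z : ℂ) : evalOP f (z : OnePoint ℂ) = evalF f z := rfl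
@[simp] lemma evalOP_infty (f : RatFunc ℂ) : evalOP f ∞ = evalF (flip f) 0 := rfl
@[simp] lemma locDeg_coe (f : RatFunc ℂ) (z : ℂ) : locDeg f (z : OnePoint ℂ) = locDegF f z := rfl
@[simp] lemma locDeg_infty (f : RatFunc ℂ) : locDeg f ∞ = locDegF (flip f) 0 := rfl

lemma flip_eq_sigma (f : RatFunc ℂ) : flip f = sigma nonconst_inv_X f := rcomp_eq_sigma _ f

lemma flip_ne_zero {f : RatFunc ℂ} (hf : f ≠ 0) : flip f ≠ 0 := by
  rw [flip_eq_sigma]; exact sigma_ne_zero _ hf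

lemma nonconst_flip {f : RatFunc ℂ} (hf : Nonconst f) : Nonconst (flip f) := by
  rw [flip_eq_sigma]; exact nonconst_sigma _ hf

lemma ordAt_inv_X : ordAt 0 (RatFunc.X : RatFunc ℂ)⁻¹ = -1 := by
  have hrep : (RatFunc.X : RatFunc ℂ)⁻¹ =
      algebraMap (Polynomial ℂ) (RatFunc ℂ) 1 / algebraMap (Polynomial ℂ) (RatFunc ℂ)
        Polynomial.X := by
    rw [map_one, RatFunc.algebraMap_X, one_div]
  rw [ordAt_rep one_ne_zero Polynomial.X_ne_zero hrep 0]
  have h1 : rootMultiplicity 0 (1 : Polynomial ℂ) = 0 :=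
    Polynomial.rootMultiplicity_eq_zero (by simp)
  have h2 : rootMultiplicity 0 (Polynomial.X : Polynomial ℂ) = 1 := by
    have := Polynomial.rootMultiplicity_X_sub_C (x := (0:ℂ)) (y := (0:ℂ))
    simpa using this
  rw [h1, h2]
  simp

lemma evalF_inv_X_zero : evalF (RatFunc.X : RatFunc ℂ)⁻¹ 0 = ∞ := by
  rw [evalF_eq_infty_iff (by simpa using nonconst_X.ne_zero) 0, ordAt_inv_X]
  norm_num

lemma locDegF_inv_X_zero : locDegF (RatFunc.X : RatFunc ℂ)⁻¹ 0 = 1 := by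
  have hx : (RatFunc.X : RatFunc ℂ)⁻¹ ≠ 0 := by simpa using nonconst_X.ne_zero
  have hd : ((RatFunc.X : RatFunc ℂ)⁻¹).denom.eval 0 = 0 := by
    rw [denom_eval_iff_ordAt hx, ordAt_inv_X]; norm_num
  have := locDegF_of_pole hx hd
  rw [ordAt_inv_X] at this
  omega

lemma ordOP_infty_eq_flip {u : RatFunc ℂ} (hu : u ≠ 0) :
    OrdOP u ∞ = ordAt 0 (flip u) := by
  rw [flip_eq_sigma, ordAt_sigma nonconst_inv_X hu 0, evalF_inv_X_zero, locDegF_inv_X_zero]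
  simp

-- `flip` distributes over subtraction of constants
lemma flip_sub_C (f : RatFunc ℂ) (c : ℂ) : flip (f - RatFunc.C c) = flip f - RatFunc.C c := by
  rw [flip_eq_sigma, flip_eq_sigma, map_sub, sigma_C]

lemma evalOP_eq_infty_iff {f : RatFunc ℂ} (hf : f ≠ 0) (x : OnePoint ℂ) :
    evalOP f x = ∞ ↔ OrdOP f x < 0 := by
  induction x using OnePoint.rec with
  | infty =>
    rw [evalOP_infty, evalF_eq_infty_iff (flip_ne_zero hf) 0, ordOP_infty_eq_flip hf]
  | coe z => rw [evalOP_coe, evalF_eq_infty_iff hf z, OrdOP_coe]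

lemma evalOP_eq_coe_iff {f : RatFunc ℂ} (hf : Nonconst f) (x : OnePoint ℂ) (c : ℂ) :
    evalOP f x = (c : OnePoint ℂ) ↔ 0 < OrdOP (f - RatFunc.C c) x := by
  have hsub : f - RatFunc.C c ≠ 0 := by
    intro h0
    exact hf c (by linear_combination (norm := ring_nf) h0)
  induction x using OnePoint.rec with
  | infty =>
    rw [evalOP_infty, evalF_eq_coe_iff (nonconst_flip hf) 0 c, ordOP_infty_eq_flip hsub,
      flip_sub_C]
  | coe z => rw [evalOP_coe, evalF_eq_coe_iff hf z c, OrdOP_coe]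

lemma locDeg_of_infty {f : RatFunc ℂ} (hf : f ≠ 0) {x : OnePoint ℂ}
    (h : evalOP f x = ∞) : (locDeg f x : ℤ) = -OrdOP f x := by
  induction x using OnePoint.rec with
  | infty =>
    rw [evalOP_infty] at h
    have hd : (flip f).denom.eval 0 = 0 := by
      rw [denom_eval_iff_ordAt (flip_ne_zero hf) 0]
      rw [evalF_eq_infty_iff (flip_ne_zero hf) 0] at h
      exact h
    rw [locDeg_infty, locDegF_of_pole (flip_ne_zero hf) hd, ordOP_infty_eq_flip hf]
  | coe z =>
    rw [evalOP_coe] at h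
    have hd : f.denom.eval z = 0 := by
      rw [denom_eval_iff_ordAt hf z]
      rw [evalF_eq_infty_iff hf z] at h
      exact h
    rw [locDeg_coe, locDegF_of_pole hf hd, OrdOP_coe]

lemma locDeg_of_coe {f : RatFunc ℂ} (hf : Nonconst f) {x : OnePoint ℂ} {c : ℂ}
    (h : evalOP f x = (c : OnePoint ℂ)) :
    (locDeg f x : ℤ) = OrdOP (f - RatFunc.C c) x := by
  have hsub : f - RatFunc.C c ≠ 0 := by
    intro h0
    exact hf c (by linear_combination (norm := ring_nf) h0)
  induction x using OnePoint.rec with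
  | infty =>
    rw [evalOP_infty] at h
    rw [locDeg_infty, locDegF_of_value (nonconst_flip hf) h, ordOP_infty_eq_flip hsub,
      flip_sub_C]
  | coe z =>
    rw [evalOP_coe] at h
    rw [locDeg_coe, locDegF_of_value hf h, OrdOP_coe]

lemma locDeg_pos {f : RatFunc ℂ} (hf : Nonconst f) (x : OnePoint ℂ) : 1 ≤ locDeg f x := by
  rcases hy : evalOP f x with _ | c
  · -- evalOP f x = ∞
    have h1 := locDeg_of_infty hf.ne_zero hy
    have h2 := (evalOP_eq_infty_iff hf.ne_zero x).mp hy
    omega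
  · have h1 := locDeg_of_coe hf (c := c) hy
    have h2 := (evalOP_eq_coe_iff hf x c).mp hy
    omega

lemma ordOP_sigma {g : RatFunc ℂ} (hg : Nonconst g) {u : RatFunc ℂ} (hu : u ≠ 0)
    (x : OnePoint ℂ) :
    OrdOP (sigma hg u) x = locDeg g x * OrdOP u (evalOP g x) := by
  induction x using OnePoint.rec with
  | infty =>
    rw [ordOP_infty_eq_flip (sigma_ne_zero hg hu), flip_eq_sigma, sigma_sigma,
      ordAt_sigma (nonconst_sigma nonconst_inv_X hg) hu 0]
    rw [locDeg_infty, evalOP_infty, flip_eq_sigma]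
  | coe z =>
    rw [OrdOP_coe, ordAt_sigma hg hu z, locDeg_coe, evalOP_coe]

lemma evalOP_rcomp {f g : RatFunc ℂ} (hf : Nonconst f) (hg : Nonconst g) (x : OnePoint ℂ) :
    evalOP (rcomp f g) x = evalOP f (evalOP g x) := by
  rw [rcomp_eq_sigma hg]
  have hdpos : (0:ℤ) < locDeg g x := by exact_mod_cast locDeg_pos hg x
  rcases hy : evalOP f (evalOP g x) with _ | c
  · show evalOP (sigma hg f) x = ∞
    rw [evalOP_eq_infty_iff (sigma_ne_zero hg hf.ne_zero) x, ordOP_sigma hg hf.ne_zero x]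
    have hy' : evalOP f (evalOP g x) = ∞ := hy
    rw [evalOP_eq_infty_iff hf.ne_zero (evalOP g x)] at hy'
    exact mul_neg_of_pos_of_neg hdpos hy'
  · show evalOP (sigma hg f) x = (c : OnePoint ℂ)
    have hsub : f - RatFunc.C c ≠ 0 := by
      intro h0
      exact hf c (by linear_combination (norm := ring_nf) h0)
    have key : sigma hg f - RatFunc.C c = sigma hg (f - RatFunc.C c) := by
      rw [map_sub, sigma_C]
    rw [evalOP_eq_coe_iff (nonconst_sigma hg hf) x c, key, ordOP_sigma hg hsub x]
    have hy' : evalOP f (evalOP g x) = (c : OnePoint ℂ) := hy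
    rw [evalOP_eq_coe_iff hf (evalOP g x) c] at hy'
    exact mul_pos hdpos hy'

lemma locDeg_rcomp {f g : RatFunc ℂ} (hf : Nonconst f) (hg : Nonconst g) (x : OnePoint ℂ) :
    locDeg (rcomp f g) x = locDeg g x * locDeg f (evalOP g x) := by
  have hcast : (locDeg (rcomp f g) x : ℤ) = (locDeg g x : ℤ) * locDeg f (evalOP g x) := by
    have hev := evalOP_rcomp hf hg x
    rcases hy : evalOP f (evalOP g x) with _ | c
    · have hy' : evalOP f (evalOP g x) = ∞ := hy
      have h1 : evalOP (rcomp f g) x = ∞ := by rw [hev, hy']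
      rw [locDeg_of_infty (nonconst_rcomp hf hg).ne_zero h1, rcomp_eq_sigma hg,
        ordOP_sigma hg hf.ne_zero x, locDeg_of_infty hf.ne_zero hy']
      ring
    · have hy' : evalOP f (evalOP g x) = (c : OnePoint ℂ) := hy
      have h1 : evalOP (rcomp f g) x = (c : OnePoint ℂ) := by rw [hev, hy']
      have hsub : f - RatFunc.C c ≠ 0 := by
        intro h0
        exact hf c (by linear_combination (norm := ring_nf) h0)
      have key : rcomp f g - RatFunc.C c = sigma hg (f - RatFunc.C c) := by
        rw [rcomp_eq_sigma hg, map_sub, sigma_C]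
      rw [locDeg_of_coe (nonconst_rcomp hf hg) h1, key, ordOP_sigma hg hsub x,
        locDeg_of_coe hf hy']
  exact_mod_cast hcast

-- ### surjectivity and finite fibers

lemma nonconst_of_both_constant {g : RatFunc ℂ} (hg : Nonconst g)
    (h1 : g.num.natDegree = 0) (h2 : g.denom.natDegree = 0) : False := by
  obtain ⟨a, ha⟩ := Polynomial.natDegree_eq_zero.mp h1
  obtain ⟨b, hb⟩ := Polynomial.natDegree_eq_zero.mp h2
  have hb0 : b ≠ 0 := by
    intro h0
    exact RatFunc.denom_ne_zero g (by rw [← hb, h0, map_zero])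
  apply hg (a / b)
  rw [← RatFunc.num_div_denom g, ← ha, ← hb, RatFunc.algebraMap_C, RatFunc.algebraMap_C]
  rw [← map_div₀]

lemma exists_root_of_natDegree_pos {p : Polynomial ℂ} (hp : 0 < p.natDegree) :
    ∃ z, p.eval z = 0 := by
  obtain ⟨z, hz⟩ := Complex.exists_root (f := p) (by
    rwa [Polynomial.natDegree_pos_iff_degree_pos] at hp)
  exact ⟨z, hz⟩

lemma natDegree_eq_zero_of_no_root {p : Polynomial ℂ} (h : ∀ z, p.eval z ≠ 0) :
    p.natDegree = 0 := by
  by_contra hne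
  obtain ⟨z, hz⟩ := exists_root_of_natDegree_pos (Nat.pos_of_ne_zero hne)
  exact h z hz

lemma evalOP_surjective {g : RatFunc ℂ} (hg : Nonconst g) :
    Function.Surjective (evalOP g) := by
  intro y
  induction y using OnePoint.rec with
  | infty =>
    by_cases h : ∃ z, g.denom.eval z = 0
    · obtain ⟨z, hz⟩ := h
      exact ⟨(z : OnePoint ℂ), by rw [evalOP_coe]; unfold evalF; rw [if_pos hz]⟩
    · push_neg at h
      have hd0 : g.denom.natDegree = 0 := natDegree_eq_zero_of_no_root h
      have hn : 0 < g.num.natDegree := by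
        by_contra hc
        exact nonconst_of_both_constant hg (by omega) hd0
      refine ⟨∞, ?_⟩
      rw [evalOP_eq_infty_iff hg.ne_zero, OrdOP_infty]
      omega
  | coe c =>
    set p := g.num - Polynomial.C c * g.denom with hp
    have hpne : p ≠ 0 := sub_C_ne_zero hg c
    by_cases h : ∃ z, p.eval z = 0
    · obtain ⟨z, hz⟩ := h
      have hd : g.denom.eval z ≠ 0 := by
        intro h0
        apply num_eval_ne_zero_of_denom h0
        have : p.eval z = g.num.eval z - c * g.denom.eval z := by simp [hp]
        rw [hz] at this
        rw [h0] at this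
        linear_combination -this
      refine ⟨(z : OnePoint ℂ), ?_⟩
      rw [evalOP_coe]
      unfold evalF
      rw [if_neg hd, OnePoint.coe_eq_coe, div_eq_iff hd]
      have : p.eval z = g.num.eval z - c * g.denom.eval z := by simp [hp]
      rw [hz] at this
      linear_combination -this
    · push_neg at h
      have hp0 : p.natDegree = 0 := natDegree_eq_zero_of_no_root h
      have hd : 0 < g.denom.natDegree := by
        by_contra hc
        have hd0 : g.denom.natDegree = 0 := by omega
        apply nonconst_of_both_constant hg ?_ hd0
        have : g.num = p + Polynomial.C c * g.denom := by rw [hp]; ring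
        rw [this]
        have h1 : (Polynomial.C c * g.denom).natDegree = 0 := by
          rcases eq_or_ne c 0 with rfl | hc0
          · simp
          · rw [Polynomial.natDegree_mul (by simpa using hc0) (RatFunc.denom_ne_zero g)]
            simp [hd0]
        have h2 : (p + Polynomial.C c * g.denom).natDegree
            ≤ max p.natDegree (Polynomial.C c * g.denom).natDegree :=
          Polynomial.natDegree_add_le _ _
        omega
      refine ⟨∞, ?_⟩
      rw [evalOP_eq_coe_iff hg ∞ c]
      have hrep : g - RatFunc.C c = algebraMap (Polynomial ℂ) (RatFunc ℂ) p /
          algebraMap (Polynomial ℂ) (RatFunc ℂ) g.denom := sub_C_rep g c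
      rw [ordOP_infty_rep hpne (RatFunc.denom_ne_zero g) hrep]
      omega

lemma finite_fiber {g : RatFunc ℂ} (hg : Nonconst g) (y : OnePoint ℂ) :
    {x : OnePoint ℂ | evalOP g x = y}.Finite := by
  have hsub : {x : OnePoint ℂ | evalOP g x = y} ⊆
      insert ∞ ((fun z : ℂ => (z : OnePoint ℂ)) '' {z : ℂ | evalF g z = y}) := by
    intro x hx
    induction x using OnePoint.rec with
    | infty => exact Set.mem_insert _ _
    | coe z =>
      apply Set.mem_insert_of_mem
      exact ⟨z, hx, rfl⟩
  apply Set.Finite.subset _ hsub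
  apply Set.Finite.insert
  apply Set.Finite.image
  induction y using OnePoint.rec with
  | infty =>
    apply Set.Finite.subset (Polynomial.finite_setOf_isRoot (RatFunc.denom_ne_zero g))
    intro z hz
    simp only [Set.mem_setOf_eq] at hz ⊢
    unfold evalF at hz
    by_contra hroot
    rw [if_neg (show ¬ g.denom.eval z = 0 from hroot)] at hz
    exact OnePoint.coe_ne_infty _ hz
  | coe c =>
    apply Set.Finite.subset (Polynomial.finite_setOf_isRoot (sub_C_ne_zero hg c))
    intro z hz
    simp only [Set.mem_setOf_eq] at hz ⊢
    unfold evalF at hz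
    by_cases hd : g.denom.eval z = 0
    · rw [if_pos hd] at hz
      exact absurd hz (OnePoint.infty_ne_coe c)
    · rw [if_neg hd, OnePoint.coe_eq_coe] at hz
      show (g.num - Polynomial.C c * g.denom).eval z = 0
      simp only [Polynomial.eval_sub, Polynomial.eval_mul, Polynomial.eval_C]
      rw [← hz]
      field_simp
      ring

-- ### the identity map

lemma num_X : (RatFunc.X : RatFunc ℂ).num = Polynomial.X := by
  rw [← RatFunc.algebraMap_X, RatFunc.num_algebraMap]

lemma denom_X : (RatFunc.X : RatFunc ℂ).denom = 1 := by
  rw [← RatFunc.algebraMap_X, RatFunc.denom_algebraMap]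

lemma evalOP_X (x : OnePoint ℂ) : evalOP (RatFunc.X : RatFunc ℂ) x = x := by
  induction x using OnePoint.rec with
  | infty =>
    rw [evalOP_infty]
    have hflip : flip (RatFunc.X : RatFunc ℂ) = (RatFunc.X : RatFunc ℂ)⁻¹ := by
      rw [flip_eq_sigma, sigma_X]
    rw [hflip, evalF_inv_X_zero]
  | coe z =>
    rw [evalOP_coe]
    unfold evalF
    rw [num_X, denom_X]
    simp

lemma locDeg_X (x : OnePoint ℂ) : locDeg (RatFunc.X : RatFunc ℂ) x = 1 := by
  induction x using OnePoint.rec with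
  | infty =>
    rw [locDeg_infty]
    have hflip : flip (RatFunc.X : RatFunc ℂ) = (RatFunc.X : RatFunc ℂ)⁻¹ := by
      rw [flip_eq_sigma, sigma_X]
    rw [hflip, locDegF_inv_X_zero]
  | coe z =>
    rw [locDeg_coe]
    unfold locDegF
    rw [num_X, denom_X]
    simp [Polynomial.rootMultiplicity_X_sub_C]

-- ### iterates

lemma riter_zero (f : RatFunc ℂ) : riter f 0 = RatFunc.X := rfl
lemma riter_succ (f : RatFunc ℂ) (l : ℕ) : riter f (l + 1) = rcomp f (riter f l) := rfl

lemma nonconst_riter {A : RatFunc ℂ} (hA : Nonconst A) (l : ℕ) : Nonconst (riter A l) := by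
  induction l with
  | zero => exact nonconst_X
  | succ n ih => exact nonconst_rcomp hA ih

lemma riter_one {A : RatFunc ℂ} (hA : Nonconst A) : riter A 1 = A := by
  rw [riter_succ, riter_zero, rcomp_X]

lemma riter_add {A : RatFunc ℂ} (hA : Nonconst A) (m n : ℕ) :
    riter A (m + n) = rcomp (riter A m) (riter A n) := by
  induction m with
  | zero =>
    rw [Nat.zero_add, riter_zero, X_rcomp (nonconst_riter hA n)]
  | succ k ih =>
    have : k + 1 + n = (k + n) + 1 := by omega
    rw [this, riter_succ, ih, ← rcomp_assoc (nonconst_riter hA k) (nonconst_riter hA n),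
      ← riter_succ]

-- ### lcm helpers

lemma lcm_range_mul (f : ℕ → ℕ) (c : ℕ) :
    ∀ n, 0 < n → (Finset.range n).lcm (fun i => f i * c) = (Finset.range n).lcm f * c := by
  intro n
  induction n with
  | zero => omega
  | succ k ih =>
    intro _
    rcases Nat.eq_zero_or_pos k with rfl | hk
    · show (Finset.range 1).lcm _ = (Finset.range 1).lcm _ * c
      rw [Finset.range_one, Finset.lcm_singleton, Finset.lcm_singleton,
        normalize_eq, normalize_eq]
    · rw [Finset.range_add_one, Finset.lcm_insert, Finset.lcm_insert, ih hk]
      have := lcm_mul_right (α := ℕ) c (f k) ((Finset.range k).lcm f)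
      rw [normalize_eq] at this
      exact this

lemma lcm_range_shift (h : ℕ → ℕ) (n : ℕ) :
    (Finset.range (n + 1)).lcm h = lcm (h 0) ((Finset.range n).lcm (fun j => h (j + 1))) := by
  induction n with
  | zero =>
    rw [Finset.range_one, Finset.lcm_singleton, Finset.range_zero, Finset.lcm_empty,
      normalize_eq]
    have : lcm (h 0) 1 = normalize (h 0) := lcm_one_right (h 0)
    rw [normalize_eq] at this
    omega
  | succ k ih =>
    rw [Finset.range_add_one, Finset.lcm_insert, ih, Finset.range_add_one, Finset.lcm_insert]
    rw [lcm_comm (h (k+1)), lcm_assoc, lcm_comm ((Finset.range k).lcm fun j => h (j + 1)), ← lcm_assoc]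

lemma lcm_range_pos {l : ℕ} (f : ℕ → ℕ) (hf : ∀ j, 0 < f j) :
    0 < (Finset.range l).lcm f := by
  rcases Nat.eq_zero_or_pos ((Finset.range l).lcm f) with h0 | h
  · rw [Finset.lcm_eq_zero_iff] at h0
    obtain ⟨j, _, hj⟩ := h0
    exact absurd hj.symm (by have := hf j; omega)
  · exact h

lemma lcm_range_eq_one {l : ℕ} (f : ℕ → ℕ) (hf : ∀ j ∈ Finset.range l, f j = 1) :
    (Finset.range l).lcm f = 1 := by
  have h1 : (Finset.range l).lcm f ∣ 1 := Finset.lcm_dvd (fun b hb => by rw [hf b hb])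
  exact Nat.eq_one_of_dvd_one h1

lemma nat_lcm_eq_right {a b : ℕ} (h : a ∣ b) : lcm a b = b :=
  Nat.dvd_antisymm (lcm_dvd h dvd_rfl) (dvd_lcm_right a b)

-- ### orbifolds (copies of the problem's definitions)

lemma nonconst_of_rdeg {A : RatFunc ℂ} (hA : 2 ≤ rdeg A) : Nonconst A := by
  intro c hc
  have h1 : A.num = Polynomial.C c := by
    rw [hc, ← RatFunc.algebraMap_C, RatFunc.num_algebraMap]
  have h2 : A.denom = 1 := by
    rw [hc, ← RatFunc.algebraMap_C, RatFunc.denom_algebraMap]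
  rw [rdeg, h1, h2] at hA
  simp at hA


theorem lattes_iterate (A : RatFunc ℂ) (hA : 2 ≤ rdeg A) (l : ℕ) (hl : 1 ≤ l)
    (h : IsLattes (riter A l)) : IsLattes A := by

  obtain ⟨-, O, hNT, hcov⟩ := h
  have hAnc : Nonconst A := nonconst_of_rdeg hA
  refine ⟨hA, ?_⟩
  have hrnc : ∀ j, Nonconst (riter A j) := nonconst_riter hAnc
  have hsurj : ∀ j, Function.Surjective (evalOP (riter A j)) :=
    fun j => evalOP_surjective (hrnc j)
  classical
  let pre : ℕ → OnePoint ℂ → OnePoint ℂ := fun j y => (hsurj j y).choose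
  have hpre : ∀ j y, evalOP (riter A j) (pre j y) = y := fun j y => (hsurj j y).choose_spec
  have chainE : ∀ m n x, evalOP (riter A (m + n)) x
      = evalOP (riter A m) (evalOP (riter A n) x) := by
    intro m n x
    rw [riter_add hAnc m n, evalOP_rcomp (hrnc m) (hrnc n)]
  have chainD : ∀ m n x, locDeg (riter A (m + n)) x
      = locDeg (riter A n) x * locDeg (riter A m) (evalOP (riter A n) x) := by
    intro m n x
    rw [riter_add hAnc m n, locDeg_rcomp (hrnc m) (hrnc n)]
  have degpos : ∀ j x, 1 ≤ locDeg (riter A j) x := fun j x => locDeg_pos (hrnc j) x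
  have dApos : ∀ x, 1 ≤ locDeg A x := fun x => locDeg_pos hAnc x
  -- covering identity, with the iterate split as (l-j) ∘ j
  have hsplit : ∀ j, j ≤ l → ∀ x : OnePoint ℂ,
      O.nu (evalOP (riter A (l - j)) (evalOP (riter A j) x))
        = O.nu x * (locDeg (riter A j) x
            * locDeg (riter A (l - j)) (evalOP (riter A j) x)) := by
    intro j hj x
    have hl' : (l - j) + j = l := Nat.sub_add_cancel hj
    have h1 := hcov x
    rw [← hl'] at h1
    rw [chainE (l - j) j x, chainD (l - j) j x] at h1
    exact h1
  -- the pushforward functions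
  set νf : ℕ → OnePoint ℂ → ℕ :=
    fun j y => O.nu (pre j y) * locDeg (riter A j) (pre j y) with hνf
  have W : ∀ j, j ≤ l → ∀ x x' : OnePoint ℂ,
      evalOP (riter A j) x = evalOP (riter A j) x' →
      O.nu x * locDeg (riter A j) x = O.nu x' * locDeg (riter A j) x' := by
    intro j hj x x' hxx
    have h1 := hsplit j hj x
    have h2 := hsplit j hj x'
    rw [hxx] at h1
    rw [← mul_assoc] at h1 h2
    have h3 : O.nu x * locDeg (riter A j) x
          * locDeg (riter A (l - j)) (evalOP (riter A j) x')
        = O.nu x' * locDeg (riter A j) x'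
          * locDeg (riter A (l - j)) (evalOP (riter A j) x') := by
      rw [← h1, ← h2]
    exact Nat.eq_of_mul_eq_mul_right (by have := degpos (l - j) (evalOP (riter A j) x'); omega) h3
  have B1 : ∀ j, j ≤ l → ∀ x : OnePoint ℂ,
      νf j (evalOP (riter A j) x) = O.nu x * locDeg (riter A j) x := by
    intro j hj x
    exact W j hj (pre j (evalOP (riter A j) x)) x (by rw [hpre])
  have B3 : ∀ j, j ≤ l → ∀ y : OnePoint ℂ,
      O.nu (evalOP (riter A (l - j)) y) = νf j y * locDeg (riter A (l - j)) y := by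
    intro j hj y
    have h1 := hsplit j hj (pre j y)
    rw [hpre j y] at h1
    rw [h1, hνf, ← mul_assoc]
  have B5 : ∀ j, j < l → ∀ x : OnePoint ℂ,
      νf (j + 1) (evalOP A x) = νf j x * locDeg A x := by
    intro j hj x
    set w := pre j x with hw
    have hwx : evalOP (riter A j) w = x := hpre j x
    have e1 : evalOP (riter A (j + 1)) w = evalOP A x := by
      rw [riter_succ, evalOP_rcomp hAnc (hrnc j), hwx]
    have d1 : locDeg (riter A (j + 1)) w = locDeg (riter A j) w * locDeg A x := by
      rw [riter_succ, locDeg_rcomp hAnc (hrnc j), hwx]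
    have h1 : νf (j + 1) (evalOP A x) = O.nu w * locDeg (riter A (j + 1)) w := by
      rw [← e1]
      exact B1 (j + 1) (by omega) w
    have h2 : νf j x = O.nu w * locDeg (riter A j) w := by
      rw [← hwx]
      exact B1 j (by omega) w
    rw [h1, d1, h2, mul_assoc]
  have B6 : ∀ y, νf l y = O.nu y := by
    intro y
    have h1 := hcov (pre l y)
    rw [hpre l y] at h1
    rw [hνf]
    exact h1.symm
  have B7 : ∀ y, νf 0 y = O.nu y := by
    intro y
    have hp0 : pre 0 y = y := by
      have := hpre 0 y
      rwa [riter_zero, evalOP_X] at this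
    rw [hνf]
    simp only [hp0, riter_zero, locDeg_X, mul_one]
  have Bpos : ∀ j y, 1 ≤ νf j y := by
    intro j y
    have := Nat.mul_le_mul (O.one_le (pre j y)) (degpos j (pre j y))
    simpa using this
  have Bfin : ∀ j, j ≤ l → {y : OnePoint ℂ | νf j y ≠ 1}.Finite := by
    intro j hj
    have hsub : {y : OnePoint ℂ | νf j y ≠ 1}
        ⊆ ⋃ w ∈ O.finite.toFinset, {y : OnePoint ℂ | evalOP (riter A (l - j)) y = w} := by
      intro y hy
      simp only [Set.mem_setOf_eq] at hy
      have h1 := B3 j hj y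
      have h2 : O.nu (evalOP (riter A (l - j)) y) ≠ 1 := by
        have ha := Bpos j y
        have hb := degpos (l - j) y
        have h2a : 2 ≤ νf j y := by omega
        rw [h1]
        have h2b : 2 ≤ νf j y * locDeg (riter A (l - j)) y :=
          le_trans h2a (Nat.le_mul_of_pos_right _ (by omega))
        omega
      simp only [Set.mem_iUnion]
      exact ⟨evalOP (riter A (l - j)) y, by simpa [Set.Finite.mem_toFinset] using h2, rfl⟩
    apply Set.Finite.subset _ hsub
    apply Set.Finite.biUnion (O.finite.toFinset.finite_toSet)
    intro w _
    exact finite_fiber (hrnc (l - j)) w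
  -- the new orbifold
  refine ⟨⟨fun y => (Finset.range l).lcm (fun j => νf j y), ?_, ?_⟩, ?_, ?_⟩
  · intro y
    exact lcm_range_pos _ (fun j => Bpos j y)
  · have hsub : {y : OnePoint ℂ | (Finset.range l).lcm (fun j => νf j y) ≠ 1}
        ⊆ ⋃ j ∈ Finset.range l, {y : OnePoint ℂ | νf j y ≠ 1} := by
      intro y hy
      simp only [Set.mem_setOf_eq] at hy
      by_contra hcon
      simp only [Set.mem_iUnion, Set.mem_setOf_eq, not_exists] at hcon
      push_neg at hcon
      apply hy
      apply lcm_range_eq_one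
      intro j hj
      exact hcon j hj
    apply Set.Finite.subset _ hsub
    apply Set.Finite.biUnion (Finset.range l).finite_toSet
    intro j hj
    exact Bfin j (by simp only [Finset.mem_coe, Finset.mem_range] at hj; omega)
  · -- nontrivial
    obtain ⟨y, hy⟩ := hNT
    refine ⟨y, ?_⟩
    show 1 < (Finset.range l).lcm (fun j => νf j y)
    have hdvd : νf 0 y ∣ (Finset.range l).lcm (fun j => νf j y) :=
      Finset.dvd_lcm (Finset.mem_range.mpr (by omega))
    have hpos : 0 < (Finset.range l).lcm (fun j => νf j y) :=
      lcm_range_pos _ (fun j => Bpos j y)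
    have := Nat.le_of_dvd hpos hdvd
    rw [B7] at this
    omega
  · -- covering
    intro x
    show (Finset.range l).lcm (fun j => νf j (evalOP A x))
      = (Finset.range l).lcm (fun j => νf j x) * locDeg A x
    set d := locDeg A x with hd
    set h0 : ℕ → ℕ := fun j => νf j (evalOP A x) with hh0
    have keyA : ∀ y : OnePoint ℂ, (Finset.range (l + 1)).lcm (fun j => νf j y)
        = (Finset.range l).lcm (fun j => νf j y) := by
      intro y
      rw [Finset.range_add_one, Finset.lcm_insert]
      have hdvd : νf l y ∣ (Finset.range l).lcm (fun j => νf j y) := by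
        rw [B6, ← B7]
        exact Finset.dvd_lcm (Finset.mem_range.mpr (by omega))
      exact nat_lcm_eq_right hdvd
    have keyB : (Finset.range (l + 1)).lcm h0
        = lcm (h0 0) ((Finset.range l).lcm (fun j => h0 (j + 1))) := lcm_range_shift h0 l
    have keyC : (Finset.range l).lcm (fun j => h0 (j + 1))
        = (Finset.range l).lcm (fun j => νf j x) * d := by
      rw [← lcm_range_mul _ _ l (by omega)]
      apply Finset.lcm_congr rfl
      intro j hj
      rw [hh0]
      exact B5 j (Finset.mem_range.mp hj) x
    have keyD : h0 0 ∣ (Finset.range l).lcm (fun j => νf j x) * d := by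
      have h1 : h0 0 = νf (l - 1) x * d := by
        rw [hh0]
        simp only
        rw [B7, ← B6]
        have : l - 1 + 1 = l := by omega
        rw [← this]
        exact B5 (l - 1) (by omega) x
      rw [h1]
      exact mul_dvd_mul_right (Finset.dvd_lcm (Finset.mem_range.mpr (by omega))) d
    calc (Finset.range l).lcm h0 = (Finset.range (l + 1)).lcm h0 := (keyA (evalOP A x)).symm
      _ = lcm (h0 0) ((Finset.range l).lcm (fun j => h0 (j + 1))) := keyB
      _ = lcm (h0 0) ((Finset.range l).lcm (fun j => νf j x) * d) := by rw [keyC]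
      _ = (Finset.range l).lcm (fun j => νf j x) * d := nat_lcm_eq_right keyD


end GenLattes
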